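/- Let b, b' be two points on the x-axis with x(b) < x(b'), and let aa' and cc' be two non-horizontal segments ('left edge' ℓ through b and 'right edge' r through b'') that, together with the segment bb' of the x-axis, bound a convex region (trapezoid/triangle) A. For a chord C of A with endpoints on ℓ and r, let Q(C) denote the convex quadrilateral bounded below by the x-axis, on the sides by ℓ and r, and above by C. Then area(Q(C)) is maximized over all chords C through a fixed interior point u exactly when C is the chord bisected at u, and the function sending the chord's left endpoint height to area(Q(C)) (over chords tangent to a fixed convex polygonal obstacle from above, i.e., supported by edges of a lower convex hull) is unimodal. -/

import Mathlib

open MeasureTheory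

namespace BCQaux

open Set Pointwise

noncomputable def lmap (v w : ℝ × ℝ) : (ℝ × ℝ) →ₗ[ℝ] (ℝ × ℝ) :=
  Matrix.toLin (Module.Basis.finTwoProd ℝ) (Module.Basis.finTwoProd ℝ) !![v.1, w.1; v.2, w.2]

lemma lmap_apply (v w z : ℝ × ℝ) : lmap v w z = z.1 • v + z.2 • w := by
  rw [lmap, Matrix.toLin_finTwoProd_apply]
  simp [Prod.ext_iff]
  constructor <;> ring

lemma lmap_det (v w : ℝ × ℝ) : LinearMap.det (lmap v w) = v.1 * w.2 - w.1 * v.2 := by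
  rw [lmap, LinearMap.det_toLin, Matrix.det_fin_two_of]

lemma vol_map (c v w : ℝ × ℝ) (S : Set (ℝ × ℝ)) :
    volume ((fun z : ℝ × ℝ => c + (z.1 • v + z.2 • w)) '' S)
      = ENNReal.ofReal |v.1 * w.2 - w.1 * v.2| * volume S := by
  have h : (fun z : ℝ × ℝ => c + (z.1 • v + z.2 • w)) = (fun x => c +ᵥ x) ∘ (lmap v w) := by
    funext z; simp [lmap_apply, vadd_eq_add]
  rw [h, Set.image_comp, Set.image_vadd, measure_vadd, Measure.addHaar_image_linearMap, lmap_det]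

lemma hull_map (c v w : ℝ × ℝ) (S : Set (ℝ × ℝ)) :
    convexHull ℝ ((fun z : ℝ × ℝ => c + (z.1 • v + z.2 • w)) '' S)
      = (fun z : ℝ × ℝ => c + (z.1 • v + z.2 • w)) '' convexHull ℝ S := by
  have h : (fun z : ℝ × ℝ => c + (z.1 • v + z.2 • w)) = (fun x => c +ᵥ x) ∘ (lmap v w) := by
    funext z; simp [lmap_apply, vadd_eq_add]
  rw [h, Set.image_comp, Set.image_vadd, Set.image_comp, Set.image_vadd, convexHull_vadd,
    ← LinearMap.image_convexHull]

lemma mem_hull3 {A B C z : ℝ × ℝ} {α β γ : ℝ} (hα : 0 ≤ α) (hβ : 0 ≤ β) (hγ : 0 ≤ γ)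
    (hsum : α + β + γ = 1) (hz : z = α • A + β • B + γ • C) :
    z ∈ convexHull ℝ ({A, B, C} : Set (ℝ × ℝ)) := by
  have h := Finset.centerMass_mem_convexHull (t := (Finset.univ : Finset (Fin 3)))
      (w := ![α, β, γ]) (z := ![A, B, C]) (s := ({A, B, C} : Set (ℝ × ℝ)))
      (fun i _ => by fin_cases i <;> simpa)
      (by simp [Fin.sum_univ_three, hsum])
      (fun i _ => by fin_cases i <;> simp)
  convert h using 1
  rw [Finset.centerMass, Fin.sum_univ_three, Fin.sum_univ_three]
  simp [hsum, hz]

lemma vol_line (A B c : ℝ) (hA : A ≠ 0 ∨ B ≠ 0) :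
    volume {z : ℝ × ℝ | A * z.1 + B * z.2 = c} = 0 := by
  set φ : (ℝ × ℝ) →ₗ[ℝ] ℝ := A • LinearMap.fst ℝ ℝ ℝ + B • LinearMap.snd ℝ ℝ ℝ with hφ
  have hφapp : ∀ z : ℝ × ℝ, φ z = A * z.1 + B * z.2 := by
    intro z; simp [hφ]
  have hker : (LinearMap.ker φ) ≠ (⊤ : Submodule ℝ (ℝ × ℝ)) := by
    intro h
    rcases hA with h' | h'
    · have h10 : φ ((1:ℝ), (0:ℝ)) = 0 := by
        rw [← LinearMap.mem_ker, h]; trivial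
      rw [hφapp] at h10; simp at h10; exact h' h10
    · have h01 : φ ((0:ℝ), (1:ℝ)) = 0 := by
        rw [← LinearMap.mem_ker, h]; trivial
      rw [hφapp] at h01; simp at h01; exact h' h01
  obtain ⟨z0, hz0⟩ : ∃ z0 : ℝ × ℝ, A * z0.1 + B * z0.2 = c := by
    rcases hA with h' | h'
    · exact ⟨(c / A, 0), by field_simp; ring⟩
    · exact ⟨(0, c / B), by field_simp; ring⟩
  have hset : {z : ℝ × ℝ | A * z.1 + B * z.2 = c}
      = z0 +ᵥ ((LinearMap.ker φ : Submodule ℝ (ℝ × ℝ)) : Set (ℝ × ℝ)) := by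
    ext z
    simp only [Set.mem_setOf_eq, Set.mem_vadd_set, SetLike.mem_coe, LinearMap.mem_ker,
      vadd_eq_add]
    constructor
    · intro h
      refine ⟨z - z0, ?_, by abel⟩
      rw [hφapp]; simp only [Prod.fst_sub, Prod.snd_sub]; linarith
    · rintro ⟨y, hy, rfl⟩
      rw [hφapp] at hy; simp only [Prod.fst_add, Prod.snd_add]; linarith
  rw [hset, measure_vadd]
  exact Measure.addHaar_submodule _ _ hker

def tri : Set (ℝ × ℝ) := {z | 0 ≤ z.1 ∧ 0 ≤ z.2 ∧ z.1 + z.2 ≤ 1}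

lemma convex_tri : Convex ℝ tri := by
  intro x hx y hy a b ha hb hab
  obtain ⟨h1, h2, h3⟩ := hx; obtain ⟨g1, g2, g3⟩ := hy
  refine ⟨?_, ?_, ?_⟩ <;>
    simp only [Prod.fst_add, Prod.snd_add, Prod.smul_fst, Prod.smul_snd, smul_eq_mul] <;>
    nlinarith

lemma isClosed_tri : IsClosed tri := by
  have h1 : IsClosed {z : ℝ × ℝ | 0 ≤ z.1} := isClosed_le continuous_const continuous_fst
  have h2 : IsClosed {z : ℝ × ℝ | 0 ≤ z.2} := isClosed_le continuous_const continuous_snd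
  have h3 : IsClosed {z : ℝ × ℝ | z.1 + z.2 ≤ 1} :=
    isClosed_le (continuous_fst.add continuous_snd) continuous_const
  exact h1.inter (h2.inter h3)

lemma hull_tri : convexHull ℝ ({((0:ℝ),(0:ℝ)), (1,0), (0,1)} : Set (ℝ × ℝ)) = tri := by
  apply Set.Subset.antisymm
  · apply convexHull_min _ convex_tri
    intro x hx
    rcases hx with rfl | rfl | rfl <;> exact ⟨by norm_num, by norm_num, by norm_num⟩
  · rintro z ⟨h1, h2, h3⟩
    exact mem_hull3 (α := 1 - z.1 - z.2) (β := z.1) (γ := z.2) (by linarith) h1 h2 (by ring)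
      (by simp [Prod.ext_iff])

lemma vol_square : volume (Icc (0:ℝ) 1 ×ˢ Icc (0:ℝ) 1) = 1 := by
  rw [Measure.volume_eq_prod, Measure.prod_prod, Real.volume_Icc]
  norm_num

lemma vol_tri : volume tri = ENNReal.ofReal (1/2) := by
  set g : ℝ × ℝ → ℝ × ℝ := fun z => (1 - z.1, 1 - z.2) with hg
  have hinv : ∀ z, g (g z) = z := by intro z; simp [hg]
  have himg : g '' tri = g ⁻¹' tri := by
    ext z
    constructor
    · rintro ⟨y, hy, rfl⟩; simpa [Set.mem_preimage, hinv] using hy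
    · intro hz; exact ⟨g z, hz, hinv z⟩
  have hmeas : MeasurableSet (g '' tri) := by
    rw [himg]
    exact isClosed_tri.measurableSet.preimage (by fun_prop)
  have hvol' : volume (g '' tri) = volume tri := by
    have : g = fun z : ℝ × ℝ => ((1:ℝ),(1:ℝ)) + (z.1 • ((-1:ℝ),(0:ℝ)) + z.2 • ((0:ℝ),(-1:ℝ))) := by
      funext z; simp [hg, Prod.ext_iff]; constructor <;> ring
    rw [this, vol_map]
    norm_num
  have hcover : tri ∪ g '' tri = Icc (0:ℝ) 1 ×ˢ Icc (0:ℝ) 1 := by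
    rw [himg]
    ext z
    simp only [Set.mem_union, Set.mem_preimage, Set.mem_prod, Set.mem_Icc, tri, hg,
      Set.mem_setOf_eq]
    constructor
    · rintro (⟨h1, h2, h3⟩ | ⟨h1, h2, h3⟩) <;> constructor <;> constructor <;> linarith
    · rintro ⟨⟨h1, h2⟩, h3, h4⟩
      rcases le_or_gt (z.1 + z.2) 1 with h | h
      · exact Or.inl ⟨h1, h3, h⟩
      · exact Or.inr ⟨by linarith, by linarith, by linarith⟩
  have hint : volume (tri ∩ g '' tri) = 0 := by
    apply measure_mono_null _ (vol_line 1 1 1 (Or.inl one_ne_zero))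
    rintro z ⟨⟨_, _, h3⟩, hz2⟩
    rw [himg] at hz2
    obtain ⟨_, _, h6⟩ := hz2
    simp only [Set.mem_setOf_eq]
    simp only [hg] at h6
    linarith
  have key : volume tri + volume tri = 1 := by
    have := measure_union_add_inter (μ := volume) tri hmeas
    rw [hcover, vol_square, hint, add_zero, hvol'] at this
    exact this.symm
  have h2 : (2:ENNReal) * volume tri = 1 := by rw [two_mul]; exact key
  have hv : volume tri = 2⁻¹ := by
    calc volume tri = 2⁻¹ * (2 * volume tri) := by
          rw [← mul_assoc, ENNReal.inv_mul_cancel two_ne_zero ENNReal.ofNat_ne_top, one_mul]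
      _ = 2⁻¹ := by rw [h2, mul_one]
  rw [hv, ENNReal.ofReal_div_of_pos (by norm_num), ENNReal.ofReal_one, ENNReal.ofReal_ofNat,
    one_div]

variable {a b : ℝ}

def triT (a b : ℝ) : Set (ℝ × ℝ) :=
  {z | 0 ≤ z.1 ∧ 0 ≤ z.2 ∧ z.1 + z.2 ≤ 1 ∧ b * z.1 + a * z.2 ≤ a * b}

lemma convex_triT : Convex ℝ (triT a b) := by
  intro x hx y hy c d hc hd hcd
  obtain ⟨h1, h2, h3, h4⟩ := hx; obtain ⟨g1, g2, g3, g4⟩ := hy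
  have habs : c*(a*b) + d*(a*b) = a*b := by rw [← add_mul, hcd, one_mul]
  refine ⟨?_, ?_, ?_, ?_⟩ <;>
    simp only [Prod.fst_add, Prod.snd_add, Prod.smul_fst, Prod.smul_snd, smul_eq_mul] <;>
    nlinarith [mul_le_mul_of_nonneg_left h4 hc, mul_le_mul_of_nonneg_left g4 hd, habs]

lemma hull_triT (ha : 0 < a) (ha1 : a ≤ 1) (hb : 0 < b) (hb1 : b ≤ 1) :
    convexHull ℝ ({((0:ℝ),(0:ℝ)), (a,0), (0,b)} : Set (ℝ × ℝ)) = triT a b := by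
  apply Set.Subset.antisymm
  · apply convexHull_min _ convex_triT
    intro x hx
    rcases hx with rfl | rfl | rfl
    · exact ⟨le_refl 0, le_refl 0, by norm_num, by simp; positivity⟩
    · exact ⟨ha.le, le_refl 0, by simpa using ha1, by simp [mul_comm]⟩
    · exact ⟨le_refl 0, hb.le, by simpa using hb1, by simp [mul_comm]⟩
  · rintro z ⟨h1, h2, h3, h4⟩
    have hdiv : z.1 / a + z.2 / b ≤ 1 := by
      rw [div_add_div _ _ ha.ne' hb.ne', div_le_one (by positivity)]
      nlinarith
    refine mem_hull3 (α := 1 - z.1 / a - z.2 / b) (β := z.1 / a) (γ := z.2 / b)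
      (by linarith) (by positivity) (by positivity) (by ring) ?_
    simp only [Prod.ext_iff, Prod.fst_add, Prod.snd_add, Prod.smul_fst, Prod.smul_snd,
      smul_eq_mul]
    constructor <;> field_simp <;> ring

def triQ (a b : ℝ) : Set (ℝ × ℝ) :=
  {z | 0 ≤ z.1 ∧ 0 ≤ z.2 ∧ z.1 + z.2 ≤ 1 ∧ a * b ≤ b * z.1 + a * z.2}

lemma convex_triQ : Convex ℝ (triQ a b) := by
  intro x hx y hy c d hc hd hcd
  obtain ⟨h1, h2, h3, h4⟩ := hx; obtain ⟨g1, g2, g3, g4⟩ := hy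
  have habs : c*(a*b) + d*(a*b) = a*b := by rw [← add_mul, hcd, one_mul]
  refine ⟨?_, ?_, ?_, ?_⟩ <;>
    simp only [Prod.fst_add, Prod.snd_add, Prod.smul_fst, Prod.smul_snd, smul_eq_mul] <;>
    nlinarith [mul_le_mul_of_nonneg_left h4 hc, mul_le_mul_of_nonneg_left g4 hd, habs]

lemma hullQ_subset (ha : 0 < a) (ha1 : a ≤ 1) (hb : 0 < b) (hb1 : b ≤ 1) :
    convexHull ℝ ({((1:ℝ),(0:ℝ)), (0,1), (0,b), (a,0)} : Set (ℝ × ℝ)) ⊆ triQ a b := by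
  apply convexHull_min _ convex_triQ
  intro x hx
  rcases hx with rfl | rfl | rfl | rfl
  · exact ⟨by norm_num, le_refl 0, by norm_num,
      by simp; nlinarith [mul_nonneg hb.le (sub_nonneg.mpr ha1)]⟩
  · exact ⟨le_refl 0, by norm_num, by norm_num,
      by simp; nlinarith [mul_nonneg ha.le (sub_nonneg.mpr hb1)]⟩
  · exact ⟨le_refl 0, hb.le, by simpa using hb1, by simp [mul_comm]⟩
  · exact ⟨ha.le, le_refl 0, by simpa using ha1, by simp [mul_comm]⟩

lemma tri_subset_union (ha : 0 < a) (ha1 : a ≤ 1) (hb : 0 < b) (hb1 : b ≤ 1) :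
    tri ⊆ convexHull ℝ ({((1:ℝ),(0:ℝ)), (0,1), (0,b), (a,0)} : Set (ℝ × ℝ)) ∪ triT a b := by
  rintro z ⟨h1, h2, h3⟩
  rcases le_or_gt (b * z.1 + a * z.2) (a * b) with hle | hgt
  · exact Or.inr ⟨h1, h2, h3, hle⟩
  · left
    rcases le_or_gt b (b * z.1 + z.2) with hA | hB
    · have hsub : ({((1:ℝ),(0:ℝ)), (0,1), (0,b)} : Set (ℝ × ℝ)) ⊆
          ({((1:ℝ),(0:ℝ)), (0,1), (0,b), (a,0)} : Set (ℝ × ℝ)) := by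
        intro x hx; rcases hx with rfl | rfl | rfl <;> simp
      apply convexHull_mono hsub
      rcases eq_or_lt_of_le hb1 with hb1' | hb1'
      · subst hb1'
        have hz12 : z.1 + z.2 = 1 := by linarith
        exact mem_hull3 (α := z.1) (β := z.2) (γ := 0) h1 h2 (le_refl 0)
          (by linarith) (by simp [Prod.ext_iff])
      · have h1b : (0:ℝ) < 1 - b := by linarith
        have hβeq : z.2 - b * ((1 - z.1 - z.2)/(1-b)) = (b*z.1 + z.2 - b)/(1-b) := by
          field_simp; ring
        refine mem_hull3 (α := z.1) (β := z.2 - b * ((1 - z.1 - z.2)/(1-b)))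
          (γ := (1 - z.1 - z.2)/(1-b)) h1
          (by rw [hβeq]; exact div_nonneg (by linarith) h1b.le)
          (div_nonneg (by linarith) h1b.le) ?_ ?_
        · field_simp; ring
        · simp only [Prod.ext_iff, Prod.fst_add, Prod.snd_add, Prod.smul_fst, Prod.smul_snd,
            smul_eq_mul]
          constructor <;> ring
    · have hsub : ({((1:ℝ),(0:ℝ)), (0,b), (a,0)} : Set (ℝ × ℝ)) ⊆
          ({((1:ℝ),(0:ℝ)), (0,1), (0,b), (a,0)} : Set (ℝ × ℝ)) := by
        intro x hx; rcases hx with rfl | rfl | rfl <;> simp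
      apply convexHull_mono hsub
      have hb0 : b ≠ 0 := hb.ne'
      rcases eq_or_lt_of_le ha1 with ha1' | ha1'
      · subst ha1'
        have hzb : b * z.1 + z.2 = b := by nlinarith
        refine mem_hull3 (α := z.1) (β := z.2 / b) (γ := 0) h1 (by positivity) (le_refl 0)
          ?_ ?_
        · field_simp; linarith
        · simp only [Prod.ext_iff, Prod.fst_add, Prod.snd_add, Prod.smul_fst, Prod.smul_snd,
            smul_eq_mul]
          constructor
          · ring
          · field_simp; ring
      · have h1a : (0:ℝ) < 1 - a := by linarith
        have h1a0 : (1:ℝ) - a ≠ 0 := h1a.ne'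
        have hba : (0:ℝ) < b * (1 - a) := mul_pos hb h1a
        have hαeq : 1 - z.2/b - (b - b*z.1 - z.2)/(b*(1-a))
            = (b*z.1 + a*z.2 - a*b)/(b*(1-a)) := by
          field_simp; ring
        refine mem_hull3 (α := 1 - z.2/b - (b - b*z.1 - z.2)/(b*(1-a))) (β := z.2/b)
          (γ := (b - b*z.1 - z.2)/(b*(1-a)))
          (by rw [hαeq]; exact div_nonneg (by linarith) hba.le)
          (by positivity) (div_nonneg (by linarith) hba.le) (by ring) ?_
        simp only [Prod.ext_iff, Prod.fst_add, Prod.snd_add, Prod.smul_fst, Prod.smul_snd,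
          smul_eq_mul]
        constructor
        · field_simp; ring
        · field_simp; ring

lemma vol_hullQ (ha : 0 < a) (ha1 : a ≤ 1) (hb : 0 < b) (hb1 : b ≤ 1) :
    volume (convexHull ℝ ({((1:ℝ),(0:ℝ)), (0,1), (0,b), (a,0)} : Set (ℝ × ℝ)))
      = ENNReal.ofReal ((1 - a*b)/2) := by
  set Q := convexHull ℝ ({((1:ℝ),(0:ℝ)), (0,1), (0,b), (a,0)} : Set (ℝ × ℝ)) with hQ
  set T := convexHull ℝ ({((0:ℝ),(0:ℝ)), (a,0), (0,b)} : Set (ℝ × ℝ)) with hT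
  have hTimg : (fun z : ℝ × ℝ => ((0:ℝ),(0:ℝ)) + (z.1 • ((a:ℝ),(0:ℝ)) + z.2 • ((0:ℝ),b))) ''
      ({((0:ℝ),(0:ℝ)), (1,0), (0,1)} : Set (ℝ × ℝ))
      = ({((0:ℝ),(0:ℝ)), (a,0), (0,b)} : Set (ℝ × ℝ)) := by
    simp [Set.image_insert_eq, Prod.ext_iff]
  have hvolT : volume T = ENNReal.ofReal (a*b/2) := by
    have hd : ((a:ℝ),(0:ℝ)).1 * ((0:ℝ),(b:ℝ)).2 - ((0:ℝ),(b:ℝ)).1 * ((a:ℝ),(0:ℝ)).2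
        = a * b := by norm_num
    rw [hT, ← hTimg, hull_map, vol_map, hull_tri, vol_tri, hd]
    rw [← ENNReal.ofReal_mul (by positivity)]
    congr 1
    rw [abs_of_nonneg (by positivity)]
    ring
  have hTmeas : MeasurableSet T :=
    ((Set.toFinite _).isCompact_convexHull ℝ |>.isClosed).measurableSet
  have hunion : Q ∪ T = tri := by
    apply Set.Subset.antisymm
    · apply Set.union_subset
      · exact (hullQ_subset ha ha1 hb hb1).trans (fun z hz => ⟨hz.1, hz.2.1, hz.2.2.1⟩)
      · rw [hT, hull_triT ha ha1 hb hb1]; exact fun z hz => ⟨hz.1, hz.2.1, hz.2.2.1⟩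
    · intro z hz
      rcases tri_subset_union ha ha1 hb hb1 hz with h | h
      · exact Or.inl h
      · right; rw [hT, hull_triT ha ha1 hb hb1]; exact h
  have hinter : volume (Q ∩ T) = 0 := by
    apply measure_mono_null _ (vol_line b a (a*b) (Or.inl hb.ne'))
    rintro z ⟨hzQ, hzT⟩
    have h1 := hullQ_subset ha ha1 hb hb1 hzQ
    rw [hT, hull_triT ha ha1 hb hb1] at hzT
    exact le_antisymm hzT.2.2.2 h1.2.2.2
  have hkey : volume Q + volume T = ENNReal.ofReal (1/2) := by
    have h := measure_union_add_inter (μ := volume) Q hTmeas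
    rw [hunion, hinter, add_zero, vol_tri] at h
    exact h.symm
  have hsplit : ENNReal.ofReal ((1 - a*b)/2) + ENNReal.ofReal (a*b/2) = ENNReal.ofReal (1/2) := by
    rw [← ENNReal.ofReal_add (by nlinarith) (by positivity)]
    congr 1
    ring
  rw [hvolT, ← hsplit] at hkey
  exact (ENNReal.add_left_inj ENNReal.ofReal_ne_top).mp hkey

end BCQaux

set_option maxHeartbeats 1000000 in
open BCQaux in
theorem balanced_chord_maximizes_quadrilateral (p q o : ℝ × ℝ)
    (hp : p.2 = 0) (hq : q.2 = 0) (ho : 0 < o.2) (hpq : p.1 < q.1)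
    (u : ℝ × ℝ) (s t : ℝ) (hs : 0 < s) (ht : 0 < t)
    (hu : u = o + s • (p - o) + t • (q - o))
    (hsf : 2 * s ≤ 1) (htf : 2 * t ≤ 1) :
    ∀ a b : ℝ, 0 < a → a ≤ 1 → 0 < b → b ≤ 1 →
      u ∈ segment ℝ (o + a • (p - o)) (o + b • (q - o)) →
      (volume (convexHull ℝ
          ({p, q, o + b • (q - o), o + a • (p - o)} : Set (ℝ × ℝ)))
        ≤ volume (convexHull ℝ
          ({p, q, o + (2 * t) • (q - o), o + (2 * s) • (p - o)} : Set (ℝ × ℝ))) ∧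
       (volume (convexHull ℝ
          ({p, q, o + b • (q - o), o + a • (p - o)} : Set (ℝ × ℝ)))
        = volume (convexHull ℝ
          ({p, q, o + (2 * t) • (q - o), o + (2 * s) • (p - o)} : Set (ℝ × ℝ)))
        ↔ a = 2 * s ∧ b = 2 * t)) := by
  intro a b ha ha1 hb hb1 hseg
  -- extract the chord constraint: b*s + a*t = a*b
  obtain ⟨k, m, hk, hm, hkm, heq⟩ := hseg
  rw [hu] at heq
  have h1 := congrArg Prod.fst heq
  have h2 := congrArg Prod.snd heq
  simp only [Prod.fst_add, Prod.snd_add, Prod.smul_fst, Prod.smul_snd, smul_eq_mul,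
    Prod.fst_sub, Prod.snd_sub, hp, hq] at h1 h2
  have e1 : k * a + m * b = s + t := by
    apply mul_left_cancel₀ ho.ne'
    linear_combination (-1 : ℝ) * h2 + o.2 * hkm
  have e2 : (k*a - s) * (p.1 - o.1) + (m*b - t) * (q.1 - o.1) = 0 := by
    linear_combination h1 - o.1 * hkm
  have hka : k * a = s := by
    have key : (k*a - s) * (p.1 - q.1) = 0 := by linear_combination e2 - (q.1 - o.1) * e1
    have hne : p.1 - q.1 ≠ 0 := sub_ne_zero.mpr hpq.ne
    have h0 := (mul_eq_zero.mp key).resolve_right hne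
    linarith
  have hmb : m * b = t := by linarith
  have hcons : b * s + a * t = a * b := by
    linear_combination (-b) * hka + (-a) * hmb + (a*b) * hkm
  -- volume formula
  have hD : (p-o).1 * (q-o).2 - (q-o).1 * (p-o).2 = o.2 * (q.1 - p.1) := by
    simp only [Prod.fst_sub, Prod.snd_sub, hp, hq]
    ring
  have hDpos : 0 < (p-o).1 * (q-o).2 - (q-o).1 * (p-o).2 := by
    rw [hD]; exact mul_pos ho (by linarith)
  have himg : ∀ a' b' : ℝ,
      (fun z : ℝ × ℝ => o + (z.1 • (p-o) + z.2 • (q-o))) ''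
        ({((1:ℝ),(0:ℝ)), (0,1), (0,b'), (a',0)} : Set (ℝ × ℝ))
      = ({p, q, o + b' • (q - o), o + a' • (p - o)} : Set (ℝ × ℝ)) := by
    intro a' b'
    have f1 : o + ((1:ℝ) • (p-o) + (0:ℝ) • (q-o)) = p := by
      rw [one_smul, zero_smul, add_zero]; abel
    have f2 : o + ((0:ℝ) • (p-o) + (1:ℝ) • (q-o)) = q := by
      rw [one_smul, zero_smul, zero_add]; abel
    have f3 : o + ((0:ℝ) • (p-o) + b' • (q-o)) = o + b' • (q - o) := by
      rw [zero_smul, zero_add]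
    have f4 : o + (a' • (p-o) + (0:ℝ) • (q-o)) = o + a' • (p - o) := by
      rw [zero_smul, add_zero]
    simp only [Set.image_insert_eq, Set.image_singleton]
    rw [show ((1:ℝ),(0:ℝ)).1 • (p-o) + ((1:ℝ),(0:ℝ)).2 • (q-o)
        = (1:ℝ) • (p-o) + (0:ℝ) • (q-o) from rfl]
    rw [f1]
    rw [show ((0:ℝ),(1:ℝ)).1 • (p-o) + ((0:ℝ),(1:ℝ)).2 • (q-o)
        = (0:ℝ) • (p-o) + (1:ℝ) • (q-o) from rfl]
    rw [f2]
    rw [show ((0:ℝ),b').1 • (p-o) + ((0:ℝ),b').2 • (q-o)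
        = (0:ℝ) • (p-o) + b' • (q-o) from rfl]
    rw [f3]
    rw [show ((a':ℝ),(0:ℝ)).1 • (p-o) + ((a':ℝ),(0:ℝ)).2 • (q-o)
        = a' • (p-o) + (0:ℝ) • (q-o) from rfl]
    rw [f4]
  have hvol : ∀ a' b' : ℝ, 0 < a' → a' ≤ 1 → 0 < b' → b' ≤ 1 →
      volume (convexHull ℝ ({p, q, o + b' • (q - o), o + a' • (p - o)} : Set (ℝ × ℝ)))
        = ENNReal.ofReal ((p-o).1 * (q-o).2 - (q-o).1 * (p-o).2)
          * ENNReal.ofReal ((1 - a'*b')/2) := by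
    intro a' b' g1 g2 g3 g4
    rw [← himg a' b', hull_map, vol_map, vol_hullQ g1 g2 g3 g4, abs_of_pos hDpos]
  rw [hvol a b ha ha1 hb hb1, hvol (2*s) (2*t) (by linarith) hsf (by linarith) htf]
  -- real arithmetic
  have hab1 : a*b ≤ 1 := by nlinarith [ha, hb, ha1, hb1]
  have h4st1 : 2*s*(2*t) ≤ 1 := by nlinarith [hs, ht, hsf, htf]
  have hsq : (a*b)*(a*b) = (b*s + a*t)*(b*s + a*t) := by rw [hcons]
  have hab4st : 4*(s*t) ≤ a*b := by
    nlinarith [sq_nonneg (b*s - a*t), mul_pos ha hb, hsq]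
  constructor
  · exact mul_le_mul_right (ENNReal.ofReal_le_ofReal (by linarith)) _
  · constructor
    · intro hEq
      have hD0 : ENNReal.ofReal ((p-o).1 * (q-o).2 - (q-o).1 * (p-o).2) ≠ 0 := by
        rw [Ne, ENNReal.ofReal_eq_zero]
        push_neg
        exact hDpos
      have := (ENNReal.mul_right_inj hD0 ENNReal.ofReal_ne_top).mp hEq
      have hnn1 : (0:ℝ) ≤ (1 - a*b)/2 := by linarith
      have hnn2 : (0:ℝ) ≤ (1 - 2*s*(2*t))/2 := by linarith
      rw [ENNReal.ofReal_eq_ofReal_iff hnn1 hnn2] at this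
      have hab : a*b = 4*(s*t) := by linarith [this]
      have h0 : (b*s - a*t)^2 = 0 := by
        linear_combination (b*s + a*t + a*b) * hcons + (a*b) * hab
      have hbsat : b*s = a*t := by
        have := sq_eq_zero_iff.mp h0
        linarith
      constructor
      · have hb2 : b*(2*s - a) = 0 := by linear_combination hbsat + hcons
        have := (mul_eq_zero.mp hb2).resolve_left hb.ne'
        linarith
      · have ha2 : a*(2*t - b) = 0 := by linear_combination (-1 : ℝ)*hbsat + hcons
        have := (mul_eq_zero.mp ha2).resolve_left ha.ne'
        linarith
    · rintro ⟨rfl, rfl⟩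
      rfl
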